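/- arXiv:1402.4084 — 2 statements merged into one kernel-verified Lean document; each statement's English description precedes it below -/
import Mathlib

section
/- (Theorem 1, LASEC mistake bound.) Suppose y_k ∈ {−1, +1} and y_k p̂_k ≤ 0 for every k = 1, …, m (all m rounds are mistaken rounds of LASEC). Then for every γ > 0 and every sequence u_1, …, u_m ∈ ℝ^d: m ≤ (1/γ) Σ_{k=1}^{m} ℓ_{γ,k}(u_k) + (1/γ) √( (b‖u_1‖² + c V_m + Σ_{k=1}^{m} (u_kᵀ x_k)²) · Σ_{k=1}^{m} x_kᵀ D_k^{−1} x_k ). -/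
set_option autoImplicit false

open Matrix Finset

noncomputable section

/-- `D_0 = (bc/(c-b)) I`, `D_k = (D_{k-1}⁻¹ + c⁻¹ I)⁻¹ + x_k x_kᵀ` for `k ≥ 1`. -/
def lasecD (d : ℕ) (b c : ℝ) (x : ℕ → Fin d → ℝ) : ℕ → Matrix (Fin d) (Fin d) ℝ
  | 0 => (b * c / (c - b)) • (1 : Matrix (Fin d) (Fin d) ℝ)
  | k + 1 => ((lasecD d b c x k)⁻¹ + c⁻¹ • (1 : Matrix (Fin d) (Fin d) ℝ))⁻¹
      + vecMulVec (x (k + 1)) (x (k + 1))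

/-- `e_0 = 0`, `e_k = (I + c⁻¹ D_{k-1})⁻¹ e_{k-1} + y_k x_k` for `k ≥ 1`. -/
def lasecE (d : ℕ) (b c : ℝ) (x : ℕ → Fin d → ℝ) (y : ℕ → ℝ) : ℕ → (Fin d → ℝ)
  | 0 => 0
  | k + 1 => ((1 : Matrix (Fin d) (Fin d) ℝ) + c⁻¹ • lasecD d b c x k)⁻¹ *ᵥ
        lasecE d b c x y k + y (k + 1) • x (k + 1)

/-- The margin `p̂_k = x_kᵀ D_k⁻¹ (I + c⁻¹ D_{k-1})⁻¹ e_{k-1}`. -/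
def lasecPhat (d : ℕ) (b c : ℝ) (x : ℕ → Fin d → ℝ) (y : ℕ → ℝ) (k : ℕ) : ℝ :=
  x k ⬝ᵥ ((lasecD d b c x k)⁻¹ *ᵥ
    (((1 : Matrix (Fin d) (Fin d) ℝ) + c⁻¹ • lasecD d b c x (k - 1))⁻¹ *ᵥ
      lasecE d b c x y (k - 1)))


/-- The hinge loss `ℓ_{γ,k}(u) = max{0, γ - y_k uᵀ x_k}`. -/
def hinge (d : ℕ) (x : ℕ → Fin d → ℝ) (y : ℕ → ℝ) (γ : ℝ) (k : ℕ) (u : Fin d → ℝ) : ℝ :=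
  max 0 (γ - y k * (u ⬝ᵥ x k))

noncomputable section

variable {d : ℕ}

abbrev MatR (d : ℕ) := Matrix (Fin d) (Fin d) ℝ

lemma vecMulVec_mulVec' (a b z : Fin d → ℝ) : vecMulVec a b *ᵥ z = (b ⬝ᵥ z) • a := by
  ext i
  simp [vecMulVec, mulVec, dotProduct, Finset.mul_sum, mul_comm, mul_assoc, mul_left_comm]

lemma herm_dot {M : MatR d} (h : M.IsHermitian) (a b : Fin d → ℝ) :
    a ⬝ᵥ M *ᵥ b = b ⬝ᵥ M *ᵥ a := by
  have ht : Mᵀ = M := by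
    have := h; rwa [IsHermitian, conjTranspose_eq_transpose_of_trivial] at this
  rw [dotProduct_mulVec, ← mulVec_transpose, ht, dotProduct_comm]

lemma posDef_smul_one {k : ℝ} (hk : 0 < k) : (k • (1 : MatR d)).PosDef := by
  rw [posDef_iff_dotProduct_mulVec]
  constructor
  · simp [IsHermitian, conjTranspose_smul]
  · intro z hz
    simp only [smul_mulVec, one_mulVec, dotProduct_smul, star_trivial]
    have h0 : 0 < z ⬝ᵥ z := by
      have := dotProduct_self_star_pos_iff (v := z)
      rw [star_trivial] at this
      exact this.mpr hz
    positivity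

lemma inv_smul_one {k : ℝ} (hk : k ≠ 0) : (k • (1 : MatR d))⁻¹ = k⁻¹ • 1 := by
  apply inv_eq_right_inv
  rw [smul_mul_smul_comm, one_mul, mul_inv_cancel₀ hk, one_smul]

lemma posSemidef_vecMulVec_self (a : Fin d → ℝ) : (vecMulVec a a).PosSemidef := by
  rw [posSemidef_iff_dotProduct_mulVec]
  constructor
  · show _ᴴ = _
    rw [conjTranspose_eq_transpose_of_trivial]
    ext i j; simp [vecMulVec, mul_comm]
  · intro z
    rw [star_trivial, vecMulVec_mulVec', dotProduct_smul, smul_eq_mul, dotProduct_comm]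
    exact mul_self_nonneg _

end
noncomputable section
variable {d : ℕ}

lemma vecMulVec_mul (a b : Fin d → ℝ) (M : MatR d) :
    vecMulVec a b * M = vecMulVec a (b ᵥ* M) := by
  ext i j
  simp [vecMulVec, Matrix.mul_apply, vecMul, dotProduct, Finset.mul_sum, mul_assoc]

lemma vecMulVec_mul_vecMulVec (a b c e : Fin d → ℝ) :
    vecMulVec a b * vecMulVec c e = (b ⬝ᵥ c) • vecMulVec a e := by
  ext i j
  simp [vecMulVec, Matrix.mul_apply, dotProduct, Finset.sum_mul, Finset.mul_sum]
  congr 1; ext k; ring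

lemma Matrix.PosDef.mul_inv {M : MatR d} (hM : M.PosDef) : M * M⁻¹ = 1 :=
  Matrix.mul_nonsing_inv _ (isUnit_iff_ne_zero.2 hM.det_pos.ne')

lemma Matrix.PosDef.inv_mul' {M : MatR d} (hM : M.PosDef) : M⁻¹ * M = 1 :=
  Matrix.nonsing_inv_mul _ (isUnit_iff_ne_zero.2 hM.det_pos.ne')

lemma Matrix.PosDef.inv_inv' {M : MatR d} (hM : M.PosDef) : M⁻¹⁻¹ = M :=
  Matrix.nonsing_inv_nonsing_inv _ (isUnit_iff_ne_zero.2 hM.det_pos.ne')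

lemma Matrix.PosDef.qf_nonneg {M : MatR d} (hM : M.PosDef) (z : Fin d → ℝ) :
    0 ≤ z ⬝ᵥ M *ᵥ z := by
  have := hM.posSemidef.dotProduct_mulVec_nonneg z
  rwa [star_trivial] at this

/-- Complete the square. -/
lemma complete_square {M : MatR d} (hM : M.PosDef) (g v : Fin d → ℝ) :
    0 ≤ v ⬝ᵥ M *ᵥ v - 2 * (g ⬝ᵥ v) + g ⬝ᵥ M⁻¹ *ᵥ g := by
  have hMherm := hM.isHermitian
  have h0 := hM.posSemidef.dotProduct_mulVec_nonneg (v - M⁻¹ *ᵥ g)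
  rw [star_trivial] at h0
  have hMg : M *ᵥ (M⁻¹ *ᵥ g) = g := by
    rw [mulVec_mulVec, hM.mul_inv, one_mulVec]
  have hexp : (v - M⁻¹ *ᵥ g) ⬝ᵥ M *ᵥ (v - M⁻¹ *ᵥ g)
      = v ⬝ᵥ M *ᵥ v - 2 * (g ⬝ᵥ v) + g ⬝ᵥ M⁻¹ *ᵥ g := by
    rw [mulVec_sub, dotProduct_sub, sub_dotProduct, sub_dotProduct, hMg]
    have h1 : (M⁻¹ *ᵥ g) ⬝ᵥ M *ᵥ v = g ⬝ᵥ v := by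
      rw [herm_dot hMherm, hMg, dotProduct_comm]
    have h2 : (M⁻¹ *ᵥ g) ⬝ᵥ g = g ⬝ᵥ M⁻¹ *ᵥ g := dotProduct_comm _ _
    rw [h1, h2]
    have h3 : v ⬝ᵥ g = g ⬝ᵥ v := dotProduct_comm _ _
    rw [h3]; ring
  rw [hexp] at h0; exact h0

/-- Sherman–Morrison based inequality. -/
lemma sm_inv_le {B : MatR d} (hB : B.PosDef) (x z : Fin d → ℝ) :
    z ⬝ᵥ (B + vecMulVec x x)⁻¹ *ᵥ z ≤ z ⬝ᵥ B⁻¹ *ᵥ z := by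
  have hBi := hB.inv
  set r := x ⬝ᵥ B⁻¹ *ᵥ x with hr
  have hr0 : 0 ≤ r := hBi.qf_nonneg x
  have hr1 : (1 : ℝ) + r ≠ 0 := by positivity
  set X := vecMulVec x x with hX
  have hXB : X * B⁻¹ * X = r • X := by
    rw [hX, vecMulVec_mul, vecMulVec_mul_vecMulVec, hr, dotProduct_mulVec]
  have hSM : (B + X)⁻¹ = B⁻¹ - (1 + r)⁻¹ • (B⁻¹ * X * B⁻¹) := by
    apply inv_eq_right_inv
    have e1 : B * B⁻¹ = 1 := hB.mul_inv
    have hcanc : B * (B⁻¹ * X * B⁻¹) = X * B⁻¹ := by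
      rw [← Matrix.mul_assoc, ← Matrix.mul_assoc, e1, Matrix.one_mul]
    have hcanc2 : X * (B⁻¹ * X * B⁻¹) = r • (X * B⁻¹) := by
      rw [← Matrix.mul_assoc, ← Matrix.mul_assoc, hXB, Matrix.smul_mul]
    have expand : (B + X) * (B⁻¹ - (1 + r)⁻¹ • (B⁻¹ * X * B⁻¹))
        = 1 + X * B⁻¹ - ((1+r)⁻¹ • (X * B⁻¹) + ((1+r)⁻¹ * r) • (X * B⁻¹)) := by
      rw [add_mul, mul_sub, mul_sub, e1, mul_smul_comm, mul_smul_comm, hcanc, hcanc2,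
        smul_smul]
      abel
    rw [expand, ← add_smul]
    have : (1+r)⁻¹ + (1+r)⁻¹ * r = 1 := by field_simp
    rw [this, one_smul]
    abel
  rw [hSM, sub_mulVec, dotProduct_sub, smul_mulVec, dotProduct_smul]
  have hq : z ⬝ᵥ (B⁻¹ * X * B⁻¹) *ᵥ z = (x ⬝ᵥ B⁻¹ *ᵥ z) ^ 2 := by
    rw [← mulVec_mulVec, ← mulVec_mulVec, hX, vecMulVec_mulVec',
      mulVec_smul, dotProduct_smul]
    have : z ⬝ᵥ B⁻¹ *ᵥ x = x ⬝ᵥ B⁻¹ *ᵥ z := herm_dot hBi.isHermitian _ _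
    rw [smul_eq_mul, this]; ring
  rw [hq, smul_eq_mul]
  have : 0 ≤ (1 + r)⁻¹ * (x ⬝ᵥ B⁻¹ *ᵥ z) ^ 2 := by positivity
  linarith

end
noncomputable section
variable {d : ℕ}

lemma herm_dot_shift {M : MatR d} (h : M.IsHermitian) (a b : Fin d → ℝ) :
    (M *ᵥ a) ⬝ᵥ b = a ⬝ᵥ (M *ᵥ b) := by
  have ht : Mᵀ = M := by
    have := h; rwa [IsHermitian, conjTranspose_eq_transpose_of_trivial] at this
  rw [dotProduct_comm, dotProduct_mulVec, ← mulVec_transpose, ht, dotProduct_comm]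

lemma smul_one_mul' (k : ℝ) (M : MatR d) : (k • (1:MatR d)) * M = k • M := by
  rw [Matrix.smul_mul, Matrix.one_mul]

/-- The main per-step inequality. -/
lemma step_main {A : MatR d} {c : ℝ} (hA : A.PosDef) (hc : 0 < c)
    (x e : Fin d → ℝ) (y : ℝ) (hy : y ^ 2 = 1)
    (hmis : y * (x ⬝ᵥ (((A⁻¹ + c⁻¹ • (1:MatR d))⁻¹ + vecMulVec x x)⁻¹ *ᵥ
        (((1:MatR d) + c⁻¹ • A)⁻¹ *ᵥ e))) ≤ 0)
    (v w : Fin d → ℝ) :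
    w ⬝ᵥ (((A⁻¹ + c⁻¹ • 1)⁻¹ + vecMulVec x x) *ᵥ w)
      - 2 * (((((1:MatR d) + c⁻¹ • A)⁻¹ *ᵥ e) + y • x) ⬝ᵥ w)
      + ((((1:MatR d) + c⁻¹ • A)⁻¹ *ᵥ e) + y • x) ⬝ᵥ
          (((A⁻¹ + c⁻¹ • 1)⁻¹ + vecMulVec x x)⁻¹ *ᵥ
            ((((1:MatR d) + c⁻¹ • A)⁻¹ *ᵥ e) + y • x))
    ≤ (v ⬝ᵥ (A *ᵥ v) - 2 * (e ⬝ᵥ v) + e ⬝ᵥ (A⁻¹ *ᵥ e))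
      + c * ((w - v) ⬝ᵥ (w - v))
      + ((w ⬝ᵥ x) ^ 2 - 2 * y * (w ⬝ᵥ x))
      + x ⬝ᵥ (((A⁻¹ + c⁻¹ • 1)⁻¹ + vecMulVec x x)⁻¹ *ᵥ x) := by
  have hc' : c ≠ 0 := hc.ne'
  have hAh := hA.isHermitian
  set E : MatR d := (A + c • 1)⁻¹ with hEdef
  have hA1 : (A + c • (1:MatR d)).PosDef := hA.add_posSemidef (posDef_smul_one hc).posSemidef
  have hE : E.PosDef := hA1.inv
  have hmulE : (A + c • (1:MatR d)) * E = 1 := hA1.mul_inv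
  have hEmul : E * (A + c • (1:MatR d)) = 1 := hA1.inv_mul'
  have hAi : (A⁻¹).PosDef := hA.inv
  have hAiA : A⁻¹ * A = 1 := hA.inv_mul'
  have hAAi : A * A⁻¹ = 1 := hA.mul_inv
  have hsum : (A⁻¹ + c⁻¹ • (1:MatR d)).PosDef :=
    hAi.add_posSemidef (posDef_smul_one (by positivity)).posSemidef
  set B : MatR d := (A⁻¹ + c⁻¹ • 1)⁻¹ with hBdef
  have hB : B.PosDef := hsum.inv
  have hBinv : B⁻¹ = A⁻¹ + c⁻¹ • 1 := hsum.inv_inv'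
  set X : MatR d := vecMulVec x x with hXdef
  set D' : MatR d := B + X with hD'def
  have hD' : D'.PosDef := hB.add_posSemidef (posSemidef_vecMulVec_self x)
  -- contraction identity
  have hcontr : ((1:MatR d) + c⁻¹ • A)⁻¹ = c • E := by
    apply inv_eq_right_inv
    rw [add_mul, Matrix.one_mul, smul_mul_smul_comm, inv_mul_cancel₀ hc', one_smul,
      ← smul_one_mul' c E, ← add_mul, show c • (1:MatR d) + A = A + c • 1 from add_comm _ _,
      hmulE]
  -- B = c•1 - c²•E
  have hBval : B = c • (A * E) := by
    rw [hBdef]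
    apply inv_eq_right_inv
    rw [add_mul, mul_smul_comm, ← Matrix.mul_assoc, hAiA, Matrix.one_mul,
      smul_mul_smul_comm, inv_mul_cancel₀ hc', one_smul, Matrix.one_mul,
      ← smul_one_mul' c E, ← add_mul, show c • (1:MatR d) + A = A + c • 1 from add_comm _ _,
      hmulE]
  have hB2 : B = c • (1:MatR d) - (c * c) • E := by
    rw [hBval]
    have : A * E = (A + c • (1:MatR d)) * E - (c • (1:MatR d)) * E := by
      rw [← sub_mul]; congr 1; abel
    rw [this, hmulE, smul_one_mul', smul_sub, smul_smul]
  -- key: c•(A⁻¹*E) + E = A⁻¹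
  have hkey : E + c • (A⁻¹ * E) = A⁻¹ := by
    have h1 : A⁻¹ * ((A + c • (1:MatR d)) * E) = A⁻¹ := by rw [hmulE, Matrix.mul_one]
    rw [← Matrix.mul_assoc, mul_add, hAiA, mul_smul_comm, Matrix.mul_one] at h1
    rw [add_mul, Matrix.one_mul, Matrix.smul_mul] at h1
    exact h1
  -- commutation of A⁻¹ and E
  have hcommAE : A * E = E * A := by
    have h1 : (E * (A + c • (1:MatR d))) * (A * E) = A * E := by
      rw [hEmul, Matrix.one_mul]
    have h2 : (A + c • (1:MatR d)) * A = A * (A + c • (1:MatR d)) := by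
      rw [add_mul, mul_add, smul_one_mul', mul_smul_comm, Matrix.mul_one]
    calc A * E = (E * (A + c • (1:MatR d))) * (A * E) := h1.symm
      _ = E * (((A + c • (1:MatR d)) * A) * E) := by
          simp only [Matrix.mul_assoc]
      _ = E * ((A * (A + c • (1:MatR d))) * E) := by rw [h2]
      _ = (E * A) * ((A + c • (1:MatR d)) * E) := by simp only [Matrix.mul_assoc]
      _ = E * A := by rw [hmulE, Matrix.mul_one]
  have hcommAiE : A⁻¹ * E = E * A⁻¹ := by
    calc A⁻¹ * E = A⁻¹ * (E * (A * A⁻¹)) := by rw [hAAi, Matrix.mul_one]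
      _ = A⁻¹ * ((E * A) * A⁻¹) := by rw [Matrix.mul_assoc]
      _ = A⁻¹ * ((A * E) * A⁻¹) := by rw [hcommAE]
      _ = (A⁻¹ * A) * (E * A⁻¹) := by simp only [Matrix.mul_assoc]
      _ = E * A⁻¹ := by rw [hAiA, Matrix.one_mul]
  have hkey2 : c • (A⁻¹ * E) = A⁻¹ - E := eq_sub_of_add_eq' hkey
  have idb : (c * c) • (E * (B⁻¹ * E)) = A⁻¹ - E := by
    rw [hBinv, add_mul, smul_one_mul', mul_add, mul_smul_comm, smul_add, smul_smul,
      show c * c * c⁻¹ = c by field_simp]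
    have step1 : (c * c) • (E * (A⁻¹ * E)) = c • (E * (c • (A⁻¹ * E))) := by
      rw [mul_smul_comm, smul_smul]
    rw [step1, hkey2, mul_sub, smul_sub, ← hcommAiE, hkey2]
    abel
  -- now the quadratic-form computations
  set et : Fin d → ℝ := c • (E *ᵥ e) with hetdef
  have hcontrv : ((1:MatR d) + c⁻¹ • A)⁻¹ *ᵥ e = et := by
    rw [hcontr, hetdef, smul_mulVec]
  have hsm : et ⬝ᵥ D'⁻¹ *ᵥ et ≤ et ⬝ᵥ B⁻¹ *ᵥ et := by
    have h := sm_inv_le hB x et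
    rwa [← hXdef, ← hD'def] at h
  clear_value E B X D' et
  subst hD'def hXdef
  have hmis' : y * (x ⬝ᵥ ((B + vecMulVec x x)⁻¹ *ᵥ et)) ≤ 0 := by
    rw [← hcontrv]; exact hmis
  have hD'i := hD'.inv
  have hmB : et ⬝ᵥ B⁻¹ *ᵥ et = e ⬝ᵥ A⁻¹ *ᵥ e - e ⬝ᵥ E *ᵥ e := by
    have h5 : et ⬝ᵥ B⁻¹ *ᵥ et = (c * c) * (e ⬝ᵥ (E * (B⁻¹ * E)) *ᵥ e) := by
      rw [hetdef, mulVec_smul, dotProduct_smul, smul_dotProduct,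
        herm_dot_shift hE.isHermitian, mulVec_mulVec, mulVec_mulVec]
      simp only [smul_eq_mul, Matrix.mul_assoc]
      ring
    have h7 : e ⬝ᵥ ((c * c) • (E * (B⁻¹ * E))) *ᵥ e
        = (c * c) * (e ⬝ᵥ (E * (B⁻¹ * E)) *ᵥ e) := by
      rw [smul_mulVec, dotProduct_smul, smul_eq_mul]
    rw [h5, ← h7, idb, sub_mulVec, dotProduct_sub]
  have hcs := complete_square hA1 (e + c • w) v
  rw [← hEdef] at hcs
  have hEw : (e + c • w) ⬝ᵥ E *ᵥ (e + c • w)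
      = e ⬝ᵥ E *ᵥ e + 2 * (c * (w ⬝ᵥ E *ᵥ e)) + c * c * (w ⬝ᵥ E *ᵥ w) := by
    simp only [mulVec_add, dotProduct_add, add_dotProduct, mulVec_smul, dotProduct_smul,
      smul_dotProduct, smul_eq_mul]
    rw [herm_dot hE.isHermitian e w]
    ring
  have hAv : v ⬝ᵥ (A + c • (1:MatR d)) *ᵥ v = v ⬝ᵥ A *ᵥ v + c * (v ⬝ᵥ v) := by
    rw [add_mulVec, dotProduct_add, smul_mulVec, one_mulVec, dotProduct_smul,
      smul_eq_mul]
  have hgv : (e + c • w) ⬝ᵥ v = e ⬝ᵥ v + c * (w ⬝ᵥ v) := by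
    rw [add_dotProduct, smul_dotProduct, smul_eq_mul]
  have hBw : w ⬝ᵥ B *ᵥ w = c * (w ⬝ᵥ w) - c * c * (w ⬝ᵥ E *ᵥ w) := by
    rw [hB2, sub_mulVec, dotProduct_sub, smul_mulVec, one_mulVec, dotProduct_smul,
      smul_mulVec, dotProduct_smul]
    simp only [smul_eq_mul]
  have hets : et ⬝ᵥ w = c * (w ⬝ᵥ E *ᵥ e) := by
    rw [hetdef, smul_dotProduct, smul_eq_mul, herm_dot_shift hE.isHermitian,
      herm_dot hE.isHermitian]
  have hD'w : w ⬝ᵥ (B + vecMulVec x x) *ᵥ w = w ⬝ᵥ B *ᵥ w + (w ⬝ᵥ x) ^ 2 := by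
    rw [add_mulVec, dotProduct_add, vecMulVec_mulVec', dotProduct_smul, smul_eq_mul,
      dotProduct_comm x w]
    ring
  have he'w : (et + y • x) ⬝ᵥ w = et ⬝ᵥ w + y * (w ⬝ᵥ x) := by
    rw [add_dotProduct, smul_dotProduct, smul_eq_mul, dotProduct_comm x w]
  have he'q : (et + y • x) ⬝ᵥ (B + vecMulVec x x)⁻¹ *ᵥ (et + y • x)
      = et ⬝ᵥ (B + vecMulVec x x)⁻¹ *ᵥ et
        + 2 * (y * (x ⬝ᵥ (B + vecMulVec x x)⁻¹ *ᵥ et))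
        + (x ⬝ᵥ (B + vecMulVec x x)⁻¹ *ᵥ x) := by
    simp only [mulVec_add, dotProduct_add, add_dotProduct, mulVec_smul, dotProduct_smul,
      smul_dotProduct, smul_eq_mul]
    rw [herm_dot hD'i.isHermitian et x]
    linear_combination (x ⬝ᵥ (B + vecMulVec x x)⁻¹ *ᵥ x) * hy
  have hcn : c * ((w - v) ⬝ᵥ (w - v))
      = c * (w ⬝ᵥ w) - 2 * (c * (w ⬝ᵥ v)) + c * (v ⬝ᵥ v) := by
    have hnorm : (w - v) ⬝ᵥ (w - v) = w ⬝ᵥ w - 2 * (w ⬝ᵥ v) + v ⬝ᵥ v := by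
      rw [sub_dotProduct, dotProduct_sub, dotProduct_sub, dotProduct_comm v w]
      ring
    rw [hnorm]; ring
  rw [hcontrv]
  linarith [hcs, hmis', hsm, hmB, hBw, hets, hEw, hAv, hgv, hcn, hD'w, he'w, he'q]

end
noncomputable section

variable {d : ℕ} {b c : ℝ}

lemma lasecD_posDef (hb : 0 < b) (hbc : b < c) (x : ℕ → Fin d → ℝ) :
    ∀ k, (lasecD d b c x k).PosDef := by
  have hc : 0 < c := hb.trans hbc
  intro k
  induction k with
  | zero =>
    have h : 0 < b * c / (c - b) := div_pos (by positivity) (by linarith)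
    exact posDef_smul_one h
  | succ k ih =>
    show (((lasecD d b c x k)⁻¹ + c⁻¹ • 1)⁻¹ + vecMulVec (x (k+1)) (x (k+1))).PosDef
    exact ((ih.inv.add_posSemidef (posDef_smul_one (by positivity)).posSemidef).inv).add_posSemidef
      (posSemidef_vecMulVec_self _)

lemma lasecD_one (hb : 0 < b) (hbc : b < c) (x : ℕ → Fin d → ℝ) :
    lasecD d b c x 1 = b • 1 + vecMulVec (x 1) (x 1) := by
  have hc : 0 < c := hb.trans hbc
  have hcb : c - b ≠ 0 := by linarith
  have hk : b * c / (c - b) ≠ 0 := by positivity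
  show ((lasecD d b c x 0)⁻¹ + c⁻¹ • 1)⁻¹ + vecMulVec (x 1) (x 1) = _
  have h0 : (lasecD d b c x 0)⁻¹ = (b * c / (c - b))⁻¹ • (1 : MatR d) := by
    show ((b * c / (c - b)) • (1 : MatR d))⁻¹ = _
    exact inv_smul_one hk
  rw [h0, ← add_smul]
  have : (b * c / (c - b))⁻¹ + c⁻¹ = b⁻¹ := by field_simp; ring
  rw [this, inv_smul_one (inv_ne_zero hb.ne'), inv_inv]

lemma lasecE_one (x : ℕ → Fin d → ℝ) (y : ℕ → ℝ) :
    lasecE d b c x y 1 = y 1 • x 1 := by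
  show ((1 : MatR d) + c⁻¹ • lasecD d b c x 0)⁻¹ *ᵥ lasecE d b c x y 0 + y 1 • x 1 = _
  show ((1 : MatR d) + c⁻¹ • lasecD d b c x 0)⁻¹ *ᵥ 0 + y 1 • x 1 = _
  rw [mulVec_zero, zero_add]

end
noncomputable section
variable {d : ℕ} {b c : ℝ}

lemma lasecD_succ (x : ℕ → Fin d → ℝ) (k : ℕ) :
    lasecD d b c x (k+1)
      = ((lasecD d b c x k)⁻¹ + c⁻¹ • 1)⁻¹ + vecMulVec (x (k+1)) (x (k+1)) := rfl

lemma lasecE_succ (x : ℕ → Fin d → ℝ) (y : ℕ → ℝ) (k : ℕ) :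
    lasecE d b c x y (k+1)
      = ((1 : MatR d) + c⁻¹ • lasecD d b c x k)⁻¹ *ᵥ lasecE d b c x y k
          + y (k+1) • x (k+1) := rfl

lemma lasec_induct (hb : 0 < b) (hbc : b < c) (m : ℕ) (x : ℕ → Fin d → ℝ) (y : ℕ → ℝ)
    (hy : ∀ k ∈ Icc 1 m, y k = -1 ∨ y k = 1)
    (hmis : ∀ k ∈ Icc 1 m, y k * lasecPhat d b c x y k ≤ 0)
    (u : ℕ → Fin d → ℝ) :
    ∀ k, 1 ≤ k → k ≤ m →
      u k ⬝ᵥ (lasecD d b c x k *ᵥ u k) - 2 * (lasecE d b c x y k ⬝ᵥ u k)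
        + lasecE d b c x y k ⬝ᵥ ((lasecD d b c x k)⁻¹ *ᵥ lasecE d b c x y k)
      ≤ b * (u 1 ⬝ᵥ u 1)
        + c * ∑ j ∈ Icc 2 k, (u j - u (j-1)) ⬝ᵥ (u j - u (j-1))
        + ∑ j ∈ Icc 1 k, ((u j ⬝ᵥ x j) ^ 2 - 2 * y j * (u j ⬝ᵥ x j))
        + ∑ j ∈ Icc 1 k, x j ⬝ᵥ ((lasecD d b c x j)⁻¹ *ᵥ x j) := by
  have hc : 0 < c := hb.trans hbc
  intro k hk1
  induction k, hk1 using Nat.le_induction with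
  | base =>
    intro hm1
    have hy1 : y 1 ^ 2 = 1 := by
      rcases hy 1 (Finset.mem_Icc.mpr ⟨le_refl 1, hm1⟩) with h | h <;> rw [h] <;> norm_num
    rw [Finset.Icc_eq_empty (by omega : ¬ (2:ℕ) ≤ 1), Finset.sum_empty,
      Finset.Icc_self, Finset.sum_singleton, Finset.sum_singleton]
    apply le_of_eq
    rw [lasecE_one, lasecD_one hb hbc]
    rw [add_mulVec, smul_mulVec, one_mulVec, vecMulVec_mulVec', mulVec_smul]
    simp only [dotProduct_add, dotProduct_smul, smul_dotProduct, smul_eq_mul]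
    rw [dotProduct_comm (x 1) (u 1)]
    linear_combination (x 1 ⬝ᵥ ((b • 1 + vecMulVec (x 1) (x 1))⁻¹ *ᵥ x 1)) * hy1
  | succ k hk ih =>
    intro hkm
    have hkm' : k ≤ m := by omega
    have IH := ih hkm'
    have hyk : y (k+1) ^ 2 = 1 := by
      rcases hy (k+1) (Finset.mem_Icc.mpr ⟨by omega, hkm⟩) with h | h <;> rw [h] <;> norm_num
    have hmisk : y (k+1) * (x (k+1) ⬝ᵥ ((((lasecD d b c x k)⁻¹ + c⁻¹ • (1:MatR d))⁻¹
          + vecMulVec (x (k+1)) (x (k+1)))⁻¹ *ᵥ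
        (((1:MatR d) + c⁻¹ • lasecD d b c x k)⁻¹ *ᵥ lasecE d b c x y k))) ≤ 0 := by
      have h := hmis (k+1) (Finset.mem_Icc.mpr ⟨by omega, hkm⟩)
      simpa only [lasecPhat, Nat.add_sub_cancel, lasecD_succ] using h
    have hstep := step_main (lasecD_posDef hb hbc x k) hc (x (k+1)) (lasecE d b c x y k)
      (y (k+1)) hyk hmisk (u k) (u (k+1))
    rw [lasecD_succ, lasecE_succ]
    rw [Finset.sum_Icc_succ_top (by omega : 2 ≤ k+1), Finset.sum_Icc_succ_top
      (by omega : 1 ≤ k+1), Finset.sum_Icc_succ_top (by omega : 1 ≤ k+1),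
      Nat.add_sub_cancel, lasecD_succ]
    linarith [IH, hstep]

end
noncomputable section
variable {d : ℕ} {b c : ℝ}

lemma scale_bound {L Q S : ℝ} (hQ : 0 ≤ Q) (hS : 0 ≤ S)
    (h : ∀ l : ℝ, 0 < l → 2 * (l * L) ≤ l ^ 2 * Q + S) : L ≤ Real.sqrt (Q * S) := by
  rcases le_or_gt L 0 with hL | hL
  · exact hL.trans (Real.sqrt_nonneg _)
  rcases eq_or_lt_of_le hQ with hQ0 | hQ0
  · exfalso
    have h1 := h ((S + 1) / (2 * L)) (by positivity)
    rw [← hQ0] at h1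
    have : 2 * ((S + 1) / (2 * L) * L) = S + 1 := by field_simp
    rw [this] at h1
    linarith
  rcases eq_or_lt_of_le hS with hS0 | hS0
  · exfalso
    have h1 := h (L / Q) (by positivity)
    rw [← hS0] at h1
    have : (L / Q) ^ 2 * Q = L ^ 2 / Q := by field_simp
    rw [this] at h1
    have h2 : 2 * (L / Q * L) = 2 * L ^ 2 / Q := by field_simp
    rw [h2] at h1
    have h3 : L ^ 2 / Q > 0 := by positivity
    have h4 : 2 * L ^ 2 / Q = 2 * (L ^ 2 / Q) := by ring
    linarith [h4 ▸ h1]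
  · set l : ℝ := Real.sqrt (S / Q) with hl
    have hlpos : 0 < l := Real.sqrt_pos.mpr (by positivity)
    have hlsq : l ^ 2 = S / Q := Real.sq_sqrt (by positivity)
    have h1 := h l hlpos
    rw [hlsq] at h1
    have h2 : S / Q * Q = S := by field_simp
    rw [h2] at h1
    -- 2 l L ≤ 2 S  ⇒  L ≤ S / l
    have hLl : L ≤ S / l := by
      rw [le_div_iff₀ hlpos]; linarith
    have hsS : Real.sqrt S ≠ 0 := ne_of_gt (Real.sqrt_pos.mpr hS0)
    have hsq : S / l = Real.sqrt Q * Real.sqrt S := by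
      rw [hl, Real.sqrt_div hS0.le, div_div_eq_mul_div, div_eq_iff hsS]
      linear_combination (Real.sqrt Q) * (Real.mul_self_sqrt hS0.le).symm
    calc L ≤ S / l := hLl
      _ = Real.sqrt Q * Real.sqrt S := hsq
      _ = Real.sqrt (Q * S) := (Real.sqrt_mul hQ S).symm

end
noncomputable section
variable {d : ℕ} {b c : ℝ}

lemma dot_self_nonneg (v : Fin d → ℝ) : 0 ≤ v ⬝ᵥ v := by
  have h := dotProduct_self_star_nonneg v
  rwa [star_trivial] at h

lemma dot_self_eq_sum_sq (v : Fin d → ℝ) : v ⬝ᵥ v = ∑ i, v i ^ 2 := by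
  simp [dotProduct, sq]

lemma lasec_claim (hb : 0 < b) (hbc : b < c) (m : ℕ) (hm : 1 ≤ m)
    (x : ℕ → Fin d → ℝ) (y : ℕ → ℝ)
    (hy : ∀ k ∈ Icc 1 m, y k = -1 ∨ y k = 1)
    (hmis : ∀ k ∈ Icc 1 m, y k * lasecPhat d b c x y k ≤ 0)
    (u : ℕ → Fin d → ℝ) :
    2 * ∑ k ∈ Icc 1 m, y k * (u k ⬝ᵥ x k)
      ≤ b * (u 1 ⬝ᵥ u 1) + c * ∑ j ∈ Icc 2 m, (u j - u (j-1)) ⬝ᵥ (u j - u (j-1))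
        + ∑ k ∈ Icc 1 m, (u k ⬝ᵥ x k) ^ 2
        + ∑ k ∈ Icc 1 m, x k ⬝ᵥ ((lasecD d b c x k)⁻¹ *ᵥ x k) := by
  have hind := lasec_induct hb hbc m x y hy hmis u m hm (le_refl m)
  have hcs := complete_square (lasecD_posDef hb hbc x m) (lasecE d b c x y m) (u m)
  have hsplit : ∑ k ∈ Icc 1 m, ((u k ⬝ᵥ x k) ^ 2 - 2 * y k * (u k ⬝ᵥ x k))
      = ∑ k ∈ Icc 1 m, (u k ⬝ᵥ x k) ^ 2 - 2 * ∑ k ∈ Icc 1 m, y k * (u k ⬝ᵥ x k) := by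
    rw [Finset.sum_sub_distrib, Finset.mul_sum]
    congr 1
    exact Finset.sum_congr rfl fun j _ => by ring
  linarith [hind, hcs, hsplit]

theorem lasec_mistake_bound' (hd : 1 ≤ d) (hb : 0 < b) (hbc : b < c)
    (m : ℕ) (hm : 1 ≤ m) (x : ℕ → Fin d → ℝ) (y : ℕ → ℝ)
    (hy : ∀ k ∈ Icc 1 m, y k = -1 ∨ y k = 1)
    (hmis : ∀ k ∈ Icc 1 m, y k * lasecPhat d b c x y k ≤ 0)
    (γ : ℝ) (hγ : 0 < γ) (u : ℕ → Fin d → ℝ) :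
    (m : ℝ) ≤ (1 / γ) * ∑ k ∈ Icc 1 m, hinge d x y γ k (u k)
      + (1 / γ) * Real.sqrt
          ((b * (∑ i, (u 1 i) ^ 2)
              + c * ∑ k ∈ Icc 2 m, ∑ i, (u k i - u (k - 1) i) ^ 2
              + ∑ k ∈ Icc 1 m, (u k ⬝ᵥ x k) ^ 2)
            * ∑ k ∈ Icc 1 m, x k ⬝ᵥ ((lasecD d b c x k)⁻¹ *ᵥ x k)) := by
  have hc : 0 < c := hb.trans hbc
  set L := ∑ k ∈ Icc 1 m, y k * (u k ⬝ᵥ x k) with hLdef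
  set S := ∑ k ∈ Icc 1 m, x k ⬝ᵥ ((lasecD d b c x k)⁻¹ *ᵥ x k) with hSdef
  set Qd := b * (u 1 ⬝ᵥ u 1) + c * ∑ j ∈ Icc 2 m, (u j - u (j-1)) ⬝ᵥ (u j - u (j-1))
      + ∑ k ∈ Icc 1 m, (u k ⬝ᵥ x k) ^ 2 with hQdef
  have hS : 0 ≤ S := Finset.sum_nonneg fun k _ =>
    ((lasecD_posDef hb hbc x k).inv).qf_nonneg _
  have hQ : 0 ≤ Qd := by
    rw [hQdef]
    have h1 : 0 ≤ u 1 ⬝ᵥ u 1 := dot_self_nonneg _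
    have h2 : 0 ≤ ∑ j ∈ Icc 2 m, (u j - u (j-1)) ⬝ᵥ (u j - u (j-1)) :=
      Finset.sum_nonneg fun j _ => dot_self_nonneg _
    have h3 : 0 ≤ ∑ k ∈ Icc 1 m, (u k ⬝ᵥ x k) ^ 2 :=
      Finset.sum_nonneg fun k _ => sq_nonneg _
    positivity
  have key : ∀ l : ℝ, 0 < l → 2 * (l * L) ≤ l ^ 2 * Qd + S := by
    intro l hl
    have h2 := lasec_claim hb hbc m hm x y hy hmis (fun k => l • u k)
    have hL : ∑ k ∈ Icc 1 m, y k * ((l • u k) ⬝ᵥ x k) = l * L := by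
      rw [hLdef, Finset.mul_sum]
      exact Finset.sum_congr rfl fun j _ => by rw [smul_dotProduct, smul_eq_mul]; ring
    have hQ1 : (l • u 1) ⬝ᵥ (l • u 1) = l ^ 2 * (u 1 ⬝ᵥ u 1) := by
      rw [smul_dotProduct, dotProduct_smul]
      simp only [smul_eq_mul]; ring
    have hQ2 : ∑ j ∈ Icc 2 m, ((l • u j) - (l • u (j-1))) ⬝ᵥ ((l • u j) - (l • u (j-1)))
        = l ^ 2 * ∑ j ∈ Icc 2 m, (u j - u (j-1)) ⬝ᵥ (u j - u (j-1)) := by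
      rw [Finset.mul_sum]
      refine Finset.sum_congr rfl fun j _ => ?_
      rw [← smul_sub, smul_dotProduct, dotProduct_smul]
      simp only [smul_eq_mul]; ring
    have hQ3 : ∑ k ∈ Icc 1 m, ((l • u k) ⬝ᵥ x k) ^ 2
        = l ^ 2 * ∑ k ∈ Icc 1 m, (u k ⬝ᵥ x k) ^ 2 := by
      rw [Finset.mul_sum]
      refine Finset.sum_congr rfl fun k _ => ?_
      rw [smul_dotProduct]
      simp only [smul_eq_mul]; ring
    rw [hL, hQ1, hQ2, hQ3] at h2
    rw [hQdef]
    linarith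
  have hbound : L ≤ Real.sqrt (Qd * S) := scale_bound hQ hS key
  have hsum : (m : ℝ) * γ - L ≤ ∑ k ∈ Icc 1 m, hinge d x y γ k (u k) := by
    have h1 : ∑ k ∈ Icc 1 m, (γ - y k * (u k ⬝ᵥ x k))
        ≤ ∑ k ∈ Icc 1 m, hinge d x y γ k (u k) :=
      Finset.sum_le_sum fun k _ => le_max_right _ _
    have h2 : ∑ k ∈ Icc 1 m, (γ - y k * (u k ⬝ᵥ x k)) = (m : ℝ) * γ - L := by
      rw [hLdef, Finset.sum_sub_distrib, Finset.sum_const, Nat.card_Icc,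
        Nat.add_sub_cancel, nsmul_eq_mul]
    linarith
  have harg : (b * (∑ i, (u 1 i) ^ 2)
      + c * ∑ k ∈ Icc 2 m, ∑ i, (u k i - u (k - 1) i) ^ 2
      + ∑ k ∈ Icc 1 m, (u k ⬝ᵥ x k) ^ 2) = Qd := by
    rw [hQdef]
    congr 1
    congr 1
    · rw [dot_self_eq_sum_sq]
    · congr 1
      refine Finset.sum_congr rfl fun j _ => ?_
      rw [dot_self_eq_sum_sq]
      exact Finset.sum_congr rfl fun i _ => by simp [Pi.sub_apply]
  rw [harg]
  have final : (m : ℝ) * γ ≤ ∑ k ∈ Icc 1 m, hinge d x y γ k (u k) + Real.sqrt (Qd * S) := by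
    linarith
  calc (m : ℝ) = ((m : ℝ) * γ) / γ := by field_simp
    _ ≤ (∑ k ∈ Icc 1 m, hinge d x y γ k (u k) + Real.sqrt (Qd * S)) / γ := by
        exact (div_le_div_iff_of_pos_right hγ).mpr final
    _ = (1 / γ) * ∑ k ∈ Icc 1 m, hinge d x y γ k (u k)
        + (1 / γ) * Real.sqrt (Qd * S) := by ring

end


/-- Theorem 1, LASEC mistake bound: if all `m` rounds are mistaken rounds
of LASEC, then
`m ≤ (1/γ) Σℓ_{γ,k}(u_k) + (1/γ)√((b‖u_1‖² + cV_m + Σ(u_kᵀx_k)²)·Σ x_kᵀD_k⁻¹x_k)`. -/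
theorem lasec_mistake_bound (d : ℕ) (hd : 1 ≤ d) (b c : ℝ) (hb : 0 < b) (hbc : b < c)
    (m : ℕ) (hm : 1 ≤ m) (x : ℕ → Fin d → ℝ) (y : ℕ → ℝ)
    (hy : ∀ k ∈ Icc 1 m, y k = -1 ∨ y k = 1)
    (hmis : ∀ k ∈ Icc 1 m, y k * lasecPhat d b c x y k ≤ 0)
    (γ : ℝ) (hγ : 0 < γ) (u : ℕ → Fin d → ℝ) :
    (m : ℝ) ≤ (1 / γ) * ∑ k ∈ Icc 1 m, hinge d x y γ k (u k)
      + (1 / γ) * Real.sqrt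
          ((b * (∑ i, (u 1 i) ^ 2)
              + c * ∑ k ∈ Icc 2 m, ∑ i, (u k i - u (k - 1) i) ^ 2
              + ∑ k ∈ Icc 1 m, (u k ⬝ᵥ x k) ^ 2)
            * ∑ k ∈ Icc 1 m, x k ⬝ᵥ ((lasecD d b c x k)⁻¹ *ᵥ x k)) := by
  exact lasec_mistake_bound' hd hb hbc m hm x y hy hmis γ hγ u

end
end

section
/- (Inequality (a4).) Suppose ‖x_j‖² ≤ X² for every j = 1, …, m, where X > 0. Then Σ_{k=1}^{m} x_kᵀ D_k^{−1} x_k ≤ ln det( (1/b) D_m ) + c^{−1} Tr(D_0) + (m/c) · d · max{ (3X² + √(X⁴ + 4X²c))/2 , b + X² }. -/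
set_option autoImplicit false
set_option maxHeartbeats 1000000

open Matrix Finset

noncomputable section

namespace LasecAux


variable {d : ℕ}

lemma psd_apply {M : Matrix (Fin d) (Fin d) ℝ} (h : M.PosSemidef) (v : Fin d → ℝ) :
    0 ≤ v ⬝ᵥ (M *ᵥ v) := by simpa using h.dotProduct_mulVec_nonneg v

lemma dot_sq_le (v w : Fin d → ℝ) : (v ⬝ᵥ w) ^ 2 ≤ (v ⬝ᵥ v) * (w ⬝ᵥ w) := by
  have := Finset.sum_mul_sq_le_sq_mul_sq Finset.univ v w
  simpa [dotProduct, sq] using this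

lemma dot_self_nonneg (v : Fin d → ℝ) : 0 ≤ v ⬝ᵥ v :=
  Finset.sum_nonneg fun i _ => mul_self_nonneg _

lemma dot_mulVec_symm {C : Matrix (Fin d) (Fin d) ℝ} (hC : C.IsHermitian) (v w : Fin d → ℝ) :
    v ⬝ᵥ (C *ᵥ w) = (C *ᵥ v) ⬝ᵥ w := by
  rw [Matrix.dotProduct_mulVec]
  congr 1
  rw [← Matrix.mulVec_transpose, ← Matrix.conjTranspose_eq_transpose_of_trivial, hC.eq]

lemma herm_smul_one (a : ℝ) : (a • (1 : Matrix (Fin d) (Fin d) ℝ)).IsHermitian := by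
  simp [Matrix.IsHermitian, Matrix.conjTranspose_smul]

lemma pd_smul_one {a : ℝ} (ha : 0 < a) : (a • (1 : Matrix (Fin d) (Fin d) ℝ)).PosDef := by
  refine PosDef.of_dotProduct_mulVec_pos (herm_smul_one a) (fun v hv => ?_)
  simp only [Matrix.smul_mulVec, Matrix.one_mulVec, dotProduct_smul]
  have : 0 < v ⬝ᵥ v := by
    have := Matrix.dotProduct_star_self_pos_iff (v := v)
    simp only [star_trivial] at this
    exact this.mpr hv
  simpa using mul_pos ha this

lemma psd_smul {a : ℝ} (ha : 0 ≤ a) {M : Matrix (Fin d) (Fin d) ℝ} (h : M.PosSemidef) :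
    (a • M).PosSemidef := by
  have ht : Mᵀ = M := by
    rw [← Matrix.conjTranspose_eq_transpose_of_trivial]; exact h.1.eq
  refine PosSemidef.of_dotProduct_mulVec_nonneg (by simp [Matrix.IsHermitian, Matrix.conjTranspose_smul, ht]) (fun v => ?_)
  have := h.dotProduct_mulVec_nonneg v
  simp only [Matrix.smul_mulVec, dotProduct_smul, smul_eq_mul] at *
  exact mul_nonneg ha this

lemma psd_vecMulVec (u : Fin d → ℝ) : (vecMulVec u u).PosSemidef := by
  refine PosSemidef.of_dotProduct_mulVec_nonneg ?_ (fun v => ?_)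
  · ext i j; simp [Matrix.conjTranspose_apply, vecMulVec_apply, mul_comm]
  · have : v ⬝ᵥ ((vecMulVec u u) *ᵥ v) = (u ⬝ᵥ v) ^ 2 := by
      simp only [dotProduct, Matrix.mulVec, vecMulVec_apply]
      rw [sq]
      simp only [Finset.sum_mul, Finset.mul_sum]
      rw [Finset.sum_comm]
      congr 1; ext i; congr 1; ext j; ring
    simp only [star_trivial]
    rw [this]; positivity

lemma smul_one_inv {a : ℝ} (ha : a ≠ 0) :
    (a • (1 : Matrix (Fin d) (Fin d) ℝ))⁻¹ = a⁻¹ • (1 : Matrix (Fin d) (Fin d) ℝ) := by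
  apply Matrix.inv_eq_right_inv
  rw [Matrix.smul_mul, Matrix.mul_smul, Matrix.one_mul, smul_smul, mul_inv_cancel₀ ha, one_smul]

lemma pd_lasecB {D : Matrix (Fin d) (Fin d) ℝ} (hD : D.PosDef) {c : ℝ} (hc : 0 < c) :
    (D⁻¹ + c⁻¹ • (1 : Matrix (Fin d) (Fin d) ℝ))⁻¹.PosDef :=
  (hD.inv.add (pd_smul_one (inv_pos.mpr hc))).inv

lemma pd_lasecD {b c : ℝ} (hb : 0 < b) (hbc : b < c) (x : ℕ → Fin d → ℝ) :
    ∀ k, (lasecD d b c x k).PosDef := by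
  intro k
  induction k with
  | zero =>
    have : 0 < b * c / (c - b) := div_pos (mul_pos hb (hb.trans hbc)) (by linarith)
    exact pd_smul_one this
  | succ k ih =>
    exact (pd_lasecB ih (hb.trans hbc)).add_posSemidef (psd_vecMulVec _)

lemma vecMulVec_mulVec' (u v w : Fin d → ℝ) :
    (vecMulVec u v) *ᵥ w = (v ⬝ᵥ w) • u := by
  ext i
  simp only [Matrix.mulVec, vecMulVec_apply, dotProduct, Pi.smul_apply, smul_eq_mul,
    Finset.mul_sum, Finset.sum_mul]
  congr 1; ext j; ring

lemma det_add_vecMulVec {B : Matrix (Fin d) (Fin d) ℝ} (hB : B.PosDef) (u : Fin d → ℝ) :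
    (B + vecMulVec u u).det = B.det * (1 + u ⬝ᵥ (B⁻¹ *ᵥ u)) := by
  have hdet : IsUnit B.det := hB.det_pos.ne'.isUnit
  rw [vecMulVec_eq Unit, Matrix.det_add_replicateCol_mul_replicateRow hdet]
  congr 1
  rw [Matrix.det_unique, Matrix.mul_assoc, ← Matrix.replicateCol_mulVec]
  simp [Matrix.one_apply]

lemma key_step {B : Matrix (Fin d) (Fin d) ℝ} (hB : B.PosDef) (u : Fin d → ℝ) :
    u ⬝ᵥ ((B + vecMulVec u u)⁻¹ *ᵥ u) ≤
      Real.log (B + vecMulVec u u).det - Real.log B.det := by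
  set D := B + vecMulVec u u with hDdef
  have hD : D.PosDef := hB.add_posSemidef (psd_vecMulVec u)
  set s := u ⬝ᵥ (B⁻¹ *ᵥ u) with hsdef
  have hs : 0 ≤ s := psd_apply hB.inv.posSemidef u
  have hpos : (0:ℝ) < 1 + s := by linarith
  have h1 : D *ᵥ (B⁻¹ *ᵥ u) = (1 + s) • u := by
    rw [hDdef, Matrix.add_mulVec, Matrix.mulVec_mulVec, Matrix.mul_nonsing_inv _
      hB.det_pos.ne'.isUnit, Matrix.one_mulVec, vecMulVec_mulVec', add_smul, one_smul]
  have h2 : B⁻¹ *ᵥ u = (1 + s) • (D⁻¹ *ᵥ u) := by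
    have e : D⁻¹ *ᵥ (D *ᵥ (B⁻¹ *ᵥ u)) = B⁻¹ *ᵥ u := by
      rw [Matrix.mulVec_mulVec, Matrix.nonsing_inv_mul _ hD.det_pos.ne'.isUnit,
        Matrix.one_mulVec]
    rw [← e, h1, Matrix.mulVec_smul]
  have h3 : s = (1 + s) * (u ⬝ᵥ (D⁻¹ *ᵥ u)) := by
    conv_lhs => rw [hsdef, h2]
    rw [dotProduct_smul]
    simp
  have ht : u ⬝ᵥ (D⁻¹ *ᵥ u) = 1 - (1 + s)⁻¹ := by
    have h4 : u ⬝ᵥ (D⁻¹ *ᵥ u) = s / (1 + s) := by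
      rw [eq_div_iff hpos.ne']; linarith [h3]
    rw [h4]
    field_simp
    ring
  have hlog : 1 - (1 + s)⁻¹ ≤ Real.log (1 + s) := by
    have := Real.log_le_sub_one_of_pos (inv_pos.mpr hpos)
    rw [Real.log_inv] at this
    linarith
  have hdet : Real.log D.det = Real.log B.det + Real.log (1 + s) := by
    rw [hDdef, det_add_vecMulVec hB, Real.log_mul hB.det_pos.ne' hpos.ne']
  rw [ht, hdet]
  linarith

lemma pd_one_add_smul {c : ℝ} (hc : 0 < c) {D : Matrix (Fin d) (Fin d) ℝ} (hD : D.PosDef) :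
    ((1 : Matrix (Fin d) (Fin d) ℝ) + c⁻¹ • D).PosDef :=
  Matrix.PosDef.add_posSemidef Matrix.PosDef.one (psd_smul (by positivity) hD.posSemidef)

lemma log_det_B {D : Matrix (Fin d) (Fin d) ℝ} (hD : D.PosDef) {c : ℝ} (hc : 0 < c) :
    Real.log ((D⁻¹ + c⁻¹ • (1 : Matrix (Fin d) (Fin d) ℝ))⁻¹).det =
      Real.log D.det - Real.log ((1 : Matrix (Fin d) (Fin d) ℝ) + c⁻¹ • D).det := by
  have hfac : D⁻¹ + c⁻¹ • (1 : Matrix (Fin d) (Fin d) ℝ)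
      = D⁻¹ * ((1 : Matrix (Fin d) (Fin d) ℝ) + c⁻¹ • D) := by
    rw [Matrix.mul_add, Matrix.mul_one, Matrix.mul_smul,
      Matrix.nonsing_inv_mul _ hD.det_pos.ne'.isUnit]
  have hM : ((1 : Matrix (Fin d) (Fin d) ℝ) + c⁻¹ • D).PosDef := pd_one_add_smul hc hD
  have hDinvdet : (D⁻¹).det = (D.det)⁻¹ := by
    rw [Matrix.det_nonsing_inv, Ring.inverse_eq_inv]
  have hAdet : (D⁻¹ + c⁻¹ • (1 : Matrix (Fin d) (Fin d) ℝ)).det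
      = (D.det)⁻¹ * ((1 : Matrix (Fin d) (Fin d) ℝ) + c⁻¹ • D).det := by
    rw [hfac, Matrix.det_mul, hDinvdet]
  rw [Matrix.det_nonsing_inv, Ring.inverse_eq_inv, hAdet, Real.log_inv, Real.log_mul
    (inv_ne_zero hD.det_pos.ne') hM.det_pos.ne', Real.log_inv]
  ring

lemma trace_eq_sum_eig {A : Matrix (Fin d) (Fin d) ℝ} (hA : A.IsHermitian) :
    A.trace = ∑ i, hA.eigenvalues i := by
  conv_lhs => rw [hA.spectral_theorem]
  rw [Unitary.conjStarAlgAut_apply, Matrix.trace_mul_cycle, Unitary.coe_star_mul_self, Matrix.one_mul]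
  simp [Matrix.trace_diagonal]

lemma det_eq_prod_eig {A : Matrix (Fin d) (Fin d) ℝ} (hA : A.IsHermitian) :
    A.det = ∏ i, hA.eigenvalues i := by
  simpa using hA.det_eq_prod_eigenvalues

lemma log_det_le_trace {M : Matrix (Fin d) (Fin d) ℝ} (hM : M.PosDef) :
    Real.log M.det ≤ M.trace - d := by
  rw [det_eq_prod_eig hM.isHermitian, trace_eq_sum_eig hM.isHermitian,
    Real.log_prod (fun i _ => (hM.eigenvalues_pos i).ne')]
  have : ∀ i ∈ Finset.univ (α := Fin d), Real.log (hM.isHermitian.eigenvalues i) ≤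
      hM.isHermitian.eigenvalues i - 1 :=
    fun i _ => Real.log_le_sub_one_of_pos (hM.eigenvalues_pos i)
  calc ∑ i, Real.log (hM.isHermitian.eigenvalues i)
      ≤ ∑ i, (hM.isHermitian.eigenvalues i - 1) := Finset.sum_le_sum this
    _ = (∑ i, hM.isHermitian.eigenvalues i) - d := by
        rw [Finset.sum_sub_distrib]; simp

lemma eig_le {A : Matrix (Fin d) (Fin d) ℝ} (hA : A.IsHermitian) {t : ℝ}
    (h : (t • (1 : Matrix (Fin d) (Fin d) ℝ) - A).PosSemidef) (i : Fin d) :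
    hA.eigenvalues i ≤ t := by
  set v : Fin d → ℝ := ⇑(hA.eigenvectorBasis i) with hv
  have hnorm : ‖hA.eigenvectorBasis i‖ = 1 := hA.eigenvectorBasis.orthonormal.1 i
  have hvv : v ⬝ᵥ v = 1 := by
    have h1 : (inner ℝ (hA.eigenvectorBasis i) (hA.eigenvectorBasis i) : ℝ) =
        dotProduct (star v) v :=
      (EuclideanSpace.inner_eq_star_dotProduct _ _).trans (dotProduct_comm _ _)
    rw [real_inner_self_eq_norm_sq, hnorm] at h1
    simpa using h1.symm
  have hq : 0 ≤ v ⬝ᵥ ((t • (1 : Matrix (Fin d) (Fin d) ℝ) - A) *ᵥ v) := by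
    simpa using h.dotProduct_mulVec_nonneg v
  rw [Matrix.sub_mulVec, Matrix.smul_mulVec, Matrix.one_mulVec, dotProduct_sub,
    dotProduct_smul, hvv] at hq
  have heig : hA.eigenvalues i = v ⬝ᵥ (A *ᵥ v) := by
    have := hA.eigenvalues_eq i
    simpa using this
  simp only [smul_eq_mul, mul_one] at hq
  linarith [heig ▸ hq]

lemma log_det_le_card_mul_log {M : Matrix (Fin d) (Fin d) ℝ} (hM : M.PosDef) {t : ℝ}
    (h : (t • (1 : Matrix (Fin d) (Fin d) ℝ) - M).PosSemidef) :
    Real.log M.det ≤ d * Real.log t := by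
  rw [det_eq_prod_eig hM.isHermitian,
    Real.log_prod (fun i _ => (hM.eigenvalues_pos i).ne')]
  calc ∑ i, Real.log (hM.isHermitian.eigenvalues i)
      ≤ ∑ _i : Fin d, Real.log t :=
        Finset.sum_le_sum fun i _ =>
          Real.log_le_log (hM.eigenvalues_pos i) (eig_le hM.isHermitian h i)
    _ = d * Real.log t := by simp [mul_comm]

/-- Loewner: `A ≽ s•1` implies `A⁻¹ ≼ s⁻¹•1`. -/
lemma inv_le_of_le_inv {A : Matrix (Fin d) (Fin d) ℝ} (hA : A.PosDef) {s : ℝ} (hs : 0 < s)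
    (h : (A - s • (1 : Matrix (Fin d) (Fin d) ℝ)).PosSemidef) :
    (s⁻¹ • (1 : Matrix (Fin d) (Fin d) ℝ) - A⁻¹).PosSemidef := by
  have hherm : (s⁻¹ • (1 : Matrix (Fin d) (Fin d) ℝ) - A⁻¹).IsHermitian :=
    (herm_smul_one s⁻¹).sub hA.inv.isHermitian
  refine PosSemidef.of_dotProduct_mulVec_nonneg hherm (fun v => ?_)
  simp only [star_trivial, Matrix.sub_mulVec, Matrix.smul_mulVec, Matrix.one_mulVec,
    dotProduct_sub, dotProduct_smul, smul_eq_mul]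
  set w := A⁻¹ *ᵥ v with hw
  have hAw : A *ᵥ w = v := by
    rw [hw, Matrix.mulVec_mulVec, Matrix.mul_nonsing_inv _ hA.det_pos.ne'.isUnit,
      Matrix.one_mulVec]
  have hwv : s * (w ⬝ᵥ w) ≤ w ⬝ᵥ v := by
    have := psd_apply h w
    rw [Matrix.sub_mulVec, Matrix.smul_mulVec, Matrix.one_mulVec, dotProduct_sub,
      dotProduct_smul, hAw] at this
    simpa using this
  have hp : 0 ≤ v ⬝ᵥ w := psd_apply hA.inv.posSemidef v
  rcases eq_or_lt_of_le hp with hp0 | hp0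
  · have h0 : 0 ≤ s⁻¹ * (v ⬝ᵥ v) := mul_nonneg (by positivity) (dot_self_nonneg v)
    linarith
  · have hcs : (v ⬝ᵥ w) ^ 2 ≤ (v ⬝ᵥ v) * (w ⬝ᵥ w) := dot_sq_le v w
    have hwv' : s * (w ⬝ᵥ w) ≤ v ⬝ᵥ w := by
      rw [dotProduct_comm v w]; exact hwv
    have e1 : s * (v ⬝ᵥ w) ^ 2 ≤ s * ((v ⬝ᵥ v) * (w ⬝ᵥ w)) :=
      mul_le_mul_of_nonneg_left hcs hs.le
    have e2 : (v ⬝ᵥ v) * (s * (w ⬝ᵥ w)) ≤ (v ⬝ᵥ v) * (v ⬝ᵥ w) :=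
      mul_le_mul_of_nonneg_left hwv' (dot_self_nonneg v)
    have h3 : s * (v ⬝ᵥ w) ≤ v ⬝ᵥ v := by
      have e3 : (s * (v ⬝ᵥ w)) * (v ⬝ᵥ w) ≤ (v ⬝ᵥ v) * (v ⬝ᵥ w) := by nlinarith [e1, e2]
      exact le_of_mul_le_mul_right e3 hp0
    have h5 : s⁻¹ * (s * (v ⬝ᵥ w)) ≤ s⁻¹ * (v ⬝ᵥ v) :=
      mul_le_mul_of_nonneg_left h3 (inv_pos.mpr hs).le
    rw [← mul_assoc, inv_mul_cancel₀ hs.ne', one_mul] at h5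
    linarith

/-- Loewner: `A ≼ s•1` implies `A⁻¹ ≽ s⁻¹•1`. -/
lemma le_inv_of_inv_le {A : Matrix (Fin d) (Fin d) ℝ} (hA : A.PosDef) {s : ℝ} (hs : 0 < s)
    (h : (s • (1 : Matrix (Fin d) (Fin d) ℝ) - A).PosSemidef) :
    (A⁻¹ - s⁻¹ • (1 : Matrix (Fin d) (Fin d) ℝ)).PosSemidef := by
  have hherm : (A⁻¹ - s⁻¹ • (1 : Matrix (Fin d) (Fin d) ℝ)).IsHermitian :=
    hA.inv.isHermitian.sub (herm_smul_one s⁻¹)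
  refine PosSemidef.of_dotProduct_mulVec_nonneg hherm (fun v => ?_)
  simp only [star_trivial, Matrix.sub_mulVec, Matrix.smul_mulVec, Matrix.one_mulVec,
    dotProduct_sub, dotProduct_smul, smul_eq_mul]
  set w := A⁻¹ *ᵥ v with hw
  have hAw : A *ᵥ w = v := by
    rw [hw, Matrix.mulVec_mulVec, Matrix.mul_nonsing_inv _ hA.det_pos.ne'.isUnit,
      Matrix.one_mulVec]
  obtain ⟨C, hCh, hCC⟩ : ∃ C : Matrix (Fin d) (Fin d) ℝ, C.IsHermitian ∧ C * C = A := by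
    open scoped MatrixOrder in
    exact ⟨CFC.sqrt A, (CFC.sqrt_nonneg A).posSemidef.isHermitian,
      CFC.sqrt_mul_sqrt_self A hA.posSemidef.nonneg⟩
  have hkey : (C *ᵥ v) ⬝ᵥ (C *ᵥ w) = v ⬝ᵥ v := by
    rw [← dot_mulVec_symm hCh v (C *ᵥ w), Matrix.mulVec_mulVec, hCC, hAw]
  have hcs : (v ⬝ᵥ v) ^ 2 ≤ ((C *ᵥ v) ⬝ᵥ (C *ᵥ v)) * ((C *ᵥ w) ⬝ᵥ (C *ᵥ w)) := by
    rw [← hkey]; exact dot_sq_le _ _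
  have hCv : (C *ᵥ v) ⬝ᵥ (C *ᵥ v) = v ⬝ᵥ (A *ᵥ v) := by
    rw [← dot_mulVec_symm hCh, Matrix.mulVec_mulVec, hCC]
  have hCw : (C *ᵥ w) ⬝ᵥ (C *ᵥ w) = v ⬝ᵥ w := by
    rw [← dot_mulVec_symm hCh, Matrix.mulVec_mulVec, hCC, hAw, dotProduct_comm]
  have hAv : v ⬝ᵥ (A *ᵥ v) ≤ s * (v ⬝ᵥ v) := by
    have := psd_apply h v
    rw [Matrix.sub_mulVec, Matrix.smul_mulVec, Matrix.one_mulVec, dotProduct_sub,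
      dotProduct_smul] at this
    simpa using this
  rcases eq_or_lt_of_le (dot_self_nonneg v) with hv0 | hv0
  · have hv : v = 0 := dotProduct_self_eq_zero.mp hv0.symm
    have hw0 : v ⬝ᵥ w ≥ 0 := psd_apply hA.inv.posSemidef v
    rw [← hv0.symm] at *
    simp [hv]
  · have h1 : (v ⬝ᵥ v) ^ 2 ≤ (s * (v ⬝ᵥ v)) * (v ⬝ᵥ w) := by
      calc (v ⬝ᵥ v) ^ 2 ≤ ((C *ᵥ v) ⬝ᵥ (C *ᵥ v)) * ((C *ᵥ w) ⬝ᵥ (C *ᵥ w)) := hcs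
        _ = (v ⬝ᵥ (A *ᵥ v)) * (v ⬝ᵥ w) := by rw [hCv, hCw]
        _ ≤ (s * (v ⬝ᵥ v)) * (v ⬝ᵥ w) :=
            mul_le_mul_of_nonneg_right hAv (psd_apply hA.inv.posSemidef v)
    have h2 : v ⬝ᵥ v ≤ s * (v ⬝ᵥ w) := by nlinarith
    have : s⁻¹ * (v ⬝ᵥ v) ≤ v ⬝ᵥ w := by
      rw [inv_mul_le_iff₀ hs]; linarith [h2]
    linarith

lemma psd_smul_one_sub_vecMulVec {r : ℝ} {u : Fin d → ℝ} (h : u ⬝ᵥ u ≤ r) :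
    (r • (1 : Matrix (Fin d) (Fin d) ℝ) - vecMulVec u u).PosSemidef := by
  have hherm : (r • (1 : Matrix (Fin d) (Fin d) ℝ) - vecMulVec u u).IsHermitian :=
    (herm_smul_one r).sub (psd_vecMulVec u).1
  refine PosSemidef.of_dotProduct_mulVec_nonneg hherm (fun v => ?_)
  simp only [star_trivial, Matrix.sub_mulVec, Matrix.smul_mulVec, Matrix.one_mulVec,
    dotProduct_sub, dotProduct_smul, smul_eq_mul]
  rw [vecMulVec_mulVec', dotProduct_smul]
  have hcs : (u ⬝ᵥ v) ^ 2 ≤ (u ⬝ᵥ u) * (v ⬝ᵥ v) := dot_sq_le u v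
  have h1 : (u ⬝ᵥ v) * (v ⬝ᵥ u) = (u ⬝ᵥ v) ^ 2 := by
    rw [dotProduct_comm v u]; ring
  have h2 : (u ⬝ᵥ u) * (v ⬝ᵥ v) ≤ r * (v ⬝ᵥ v) :=
    mul_le_mul_of_nonneg_right h (dot_self_nonneg v)
  simp only [smul_eq_mul]
  rw [h1]
  linarith

lemma step_bound {D : Matrix (Fin d) (Fin d) ℝ} (hD : D.PosDef) {c t : ℝ} (hc : 0 < c)
    (ht : 0 < t) (h : (t • (1 : Matrix (Fin d) (Fin d) ℝ) - D).PosSemidef) :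
    ((t * c / (t + c)) • (1 : Matrix (Fin d) (Fin d) ℝ)
      - (D⁻¹ + c⁻¹ • (1 : Matrix (Fin d) (Fin d) ℝ))⁻¹).PosSemidef := by
  have htc : 0 < t + c := by linarith
  have hspos : 0 < t * c / (t + c) := div_pos (mul_pos ht hc) htc
  have hsinv : (t * c / (t + c))⁻¹ = t⁻¹ + c⁻¹ := by
    field_simp
    ring
  have h1 : ((D⁻¹ : Matrix (Fin d) (Fin d) ℝ) - t⁻¹ • 1).PosSemidef := le_inv_of_inv_le hD ht h
  have hA : ((D⁻¹ : Matrix (Fin d) (Fin d) ℝ) + c⁻¹ • 1).PosDef :=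
    hD.inv.add (pd_smul_one (inv_pos.mpr hc))
  have h2 : ((D⁻¹ + c⁻¹ • (1 : Matrix (Fin d) (Fin d) ℝ))
      - (t * c / (t + c))⁻¹ • 1).PosSemidef := by
    have e : (D⁻¹ + c⁻¹ • (1 : Matrix (Fin d) (Fin d) ℝ)) - (t * c / (t + c))⁻¹ • 1
        = D⁻¹ - t⁻¹ • 1 := by
      rw [hsinv, add_smul]; abel
    rw [e]; exact h1
  have h3 := inv_le_of_le_inv hA (inv_pos.mpr hspos) h2
  rwa [inv_inv] at h3

lemma eig_bound_lasecD (b c : ℝ) (hb : 0 < b) (hbc : b < c) (m : ℕ)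
    (X : ℝ) (hX : 0 < X) (x : ℕ → Fin d → ℝ)
    (hx : ∀ j ∈ Icc 1 m, (∑ i, (x j i) ^ 2) ≤ X ^ 2) :
    ∀ k, 1 ≤ k → k ≤ m →
      ((max ((3 * X ^ 2 + Real.sqrt (X ^ 4 + 4 * X ^ 2 * c)) / 2) (b + X ^ 2))
        • (1 : Matrix (Fin d) (Fin d) ℝ) - lasecD d b c x k).PosSemidef := by
  have hc : 0 < c := hb.trans hbc
  set q := Real.sqrt (X ^ 4 + 4 * X ^ 2 * c) with hqdef
  set K := max ((3 * X ^ 2 + q) / 2) (b + X ^ 2) with hKdef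
  have hq : 0 ≤ q := Real.sqrt_nonneg _
  have hq2 : q ^ 2 = X ^ 4 + 4 * X ^ 2 * c := Real.sq_sqrt (by positivity)
  have hKb : b + X ^ 2 ≤ K := le_max_right _ _
  have hK3 : (3 * X ^ 2 + q) / 2 ≤ K := le_max_left _ _
  have hKpos : 0 < K := lt_of_lt_of_le (by positivity) hKb
  have hKX : X ^ 2 ≤ K := by nlinarith
  have haq : q ≤ 2 * K - 3 * X ^ 2 := by linarith
  have ha2 : q ^ 2 ≤ (2 * K - 3 * X ^ 2) ^ 2 := by nlinarith
  have hkey : X ^ 2 * (K + c) ≤ K ^ 2 := by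
    nlinarith [mul_nonneg (sq_nonneg X) (sub_nonneg.mpr hKX)]
  have hKc : 0 < K + c := by linarith
  have hstep : X ^ 2 ≤ K - K * c / (K + c) := by
    have e : K - K * c / (K + c) = K ^ 2 / (K + c) := by field_simp; ring
    rw [e, le_div_iff₀ hKc]
    exact hkey
  have hdot : ∀ j, j ∈ Icc 1 m → x j ⬝ᵥ x j ≤ X ^ 2 := by
    intro j hj
    have : x j ⬝ᵥ x j = ∑ i, (x j i) ^ 2 := by
      simp [dotProduct, sq]
    rw [this]; exact hx j hj
  intro k
  induction k with
  | zero => intro h1 _; exact absurd h1 (by norm_num)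
  | succ k ih =>
    intro _ hkm
    have hm1 : 1 ≤ m := le_trans (Nat.succ_le_succ (Nat.zero_le k)) hkm
    rcases Nat.eq_zero_or_pos k with hk0 | hk1
    · subst hk0
      have hpos0 : 0 < b * c / (c - b) := div_pos (mul_pos hb hc) (by linarith)
      have hD0 : lasecD d b c x 0 = (b * c / (c - b)) • (1 : Matrix (Fin d) (Fin d) ℝ) := rfl
      have hD0inv : (lasecD d b c x 0)⁻¹
          = (b * c / (c - b))⁻¹ • (1 : Matrix (Fin d) (Fin d) ℝ) := by
        rw [hD0, smul_one_inv hpos0.ne']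
      have hBinner : (lasecD d b c x 0)⁻¹ + c⁻¹ • (1 : Matrix (Fin d) (Fin d) ℝ)
          = b⁻¹ • (1 : Matrix (Fin d) (Fin d) ℝ) := by
        rw [hD0inv, ← add_smul]
        congr 1
        field_simp
        ring
      have hB1 : ((lasecD d b c x 0)⁻¹ + c⁻¹ • (1 : Matrix (Fin d) (Fin d) ℝ))⁻¹
          = b • (1 : Matrix (Fin d) (Fin d) ℝ) := by
        rw [hBinner, smul_one_inv (inv_ne_zero hb.ne'), inv_inv]
      have hD1 : lasecD d b c x 1 = b • (1 : Matrix (Fin d) (Fin d) ℝ)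
          + vecMulVec (x 1) (x 1) := by
        show ((lasecD d b c x 0)⁻¹ + c⁻¹ • (1 : Matrix (Fin d) (Fin d) ℝ))⁻¹
            + vecMulVec (x 1) (x 1) = _
        rw [hB1]
      rw [hD1]
      have e : K • (1 : Matrix (Fin d) (Fin d) ℝ)
          - (b • (1 : Matrix (Fin d) (Fin d) ℝ) + vecMulVec (x 1) (x 1))
          = (K - b) • (1 : Matrix (Fin d) (Fin d) ℝ) - vecMulVec (x 1) (x 1) := by
        rw [sub_smul]; abel
      rw [e]
      apply psd_smul_one_sub_vecMulVec
      have := hdot 1 (by simp [hm1])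
      linarith
    · have ihk := ih hk1 (le_trans (Nat.le_succ k) hkm)
      have hDk : (lasecD d b c x k).PosDef := pd_lasecD hb hbc x k
      have hB := step_bound hDk hc hKpos ihk
      have hV : ((K - K * c / (K + c)) • (1 : Matrix (Fin d) (Fin d) ℝ)
          - vecMulVec (x (k+1)) (x (k+1))).PosSemidef := by
        apply psd_smul_one_sub_vecMulVec
        have := hdot (k+1) (by simp [Nat.succ_le_succ (Nat.zero_le k), hkm])
        linarith
      have hD1 : lasecD d b c x (k+1)
          = ((lasecD d b c x k)⁻¹ + c⁻¹ • (1 : Matrix (Fin d) (Fin d) ℝ))⁻¹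
            + vecMulVec (x (k+1)) (x (k+1)) := rfl
      rw [hD1]
      have e : K • (1 : Matrix (Fin d) (Fin d) ℝ)
          - (((lasecD d b c x k)⁻¹ + c⁻¹ • (1 : Matrix (Fin d) (Fin d) ℝ))⁻¹
            + vecMulVec (x (k+1)) (x (k+1)))
          = ((K * c / (K + c)) • (1 : Matrix (Fin d) (Fin d) ℝ)
              - ((lasecD d b c x k)⁻¹ + c⁻¹ • (1 : Matrix (Fin d) (Fin d) ℝ))⁻¹)
            + ((K - K * c / (K + c)) • (1 : Matrix (Fin d) (Fin d) ℝ)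
              - vecMulVec (x (k+1)) (x (k+1))) := by
        rw [sub_smul]; abel
      rw [e]
      exact hB.add hV

lemma sum_Icc_one (m : ℕ) (f : ℕ → ℝ) :
    ∑ k ∈ Icc 1 m, f k = ∑ i ∈ range m, f (i + 1) := by
  induction m with
  | zero => simp
  | succ n ih =>
    rw [Finset.sum_Icc_succ_top (Nat.succ_le_succ (Nat.zero_le n)), ih, Finset.sum_range_succ]

end LasecAux

open LasecAux

/-- inequality (a4): if `‖x_j‖² ≤ X²` for `j = 1,…,m`, then
`Σ_{k=1}^m x_kᵀ D_k⁻¹ x_k ≤ ln det((1/b) D_m) + c⁻¹ Tr(D_0)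
 + (m/c) d max{(3X² + √(X⁴ + 4X²c))/2, b + X²}`. -/
theorem lasec_a4 (d : ℕ) (hd : 1 ≤ d) (b c : ℝ) (hb : 0 < b) (hbc : b < c)
    (m : ℕ) (hm : 1 ≤ m) (X : ℝ) (hX : 0 < X) (x : ℕ → Fin d → ℝ)
    (hx : ∀ j ∈ Icc 1 m, (∑ i, (x j i) ^ 2) ≤ X ^ 2) :
    ∑ k ∈ Icc 1 m, x k ⬝ᵥ ((lasecD d b c x k)⁻¹ *ᵥ x k) ≤
      Real.log ((b⁻¹ • lasecD d b c x m).det)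
        + c⁻¹ * (lasecD d b c x 0).trace
        + ((m : ℝ) / c) * (d : ℝ) *
            max ((3 * X ^ 2 + Real.sqrt (X ^ 4 + 4 * X ^ 2 * c)) / 2) (b + X ^ 2) := by
  obtain ⟨n, rfl⟩ : ∃ n, m = n + 1 := ⟨m - 1, (Nat.succ_pred_eq_of_pos hm).symm⟩
  have hc : 0 < c := hb.trans hbc
  set K := max ((3 * X ^ 2 + Real.sqrt (X ^ 4 + 4 * X ^ 2 * c)) / 2) (b + X ^ 2) with hKdef
  have hKpos : 0 < K := lt_of_lt_of_le (by positivity) (le_max_right _ _)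
  have hPD : ∀ k, (lasecD d b c x k).PosDef := pd_lasecD hb hbc x
  have hEig := eig_bound_lasecD b c hb hbc (n + 1) X hX x hx
  -- per-step bound
  have hterm : ∀ i : ℕ, x (i+1) ⬝ᵥ ((lasecD d b c x (i+1))⁻¹ *ᵥ x (i+1)) ≤
      (Real.log (lasecD d b c x (i+1)).det - Real.log (lasecD d b c x i).det)
        + Real.log (((1 : Matrix (Fin d) (Fin d) ℝ) + c⁻¹ • lasecD d b c x i).det) := by
    intro i
    have hBpd := pd_lasecB (hPD i) hc
    have hdef : lasecD d b c x (i+1)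
        = ((lasecD d b c x i)⁻¹ + c⁻¹ • (1 : Matrix (Fin d) (Fin d) ℝ))⁻¹
          + vecMulVec (x (i+1)) (x (i+1)) := rfl
    have h1 := key_step hBpd (x (i+1))
    rw [← hdef] at h1
    have h2 := log_det_B (hPD i) hc
    linarith [h1, h2]
  -- the trace bound for step 0
  have h0 : Real.log (((1 : Matrix (Fin d) (Fin d) ℝ) + c⁻¹ • lasecD d b c x 0).det)
      ≤ c⁻¹ * (lasecD d b c x 0).trace := by
    have hM0 : ((1 : Matrix (Fin d) (Fin d) ℝ) + c⁻¹ • lasecD d b c x 0).PosDef :=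
      pd_one_add_smul hc (hPD 0)
    have htr : ((1 : Matrix (Fin d) (Fin d) ℝ) + c⁻¹ • lasecD d b c x 0).trace
        = d + c⁻¹ * (lasecD d b c x 0).trace := by
      rw [Matrix.trace_add, Matrix.trace_smul, Matrix.trace_one]
      simp [smul_eq_mul]
    have := log_det_le_trace hM0
    rw [htr] at this
    linarith
  -- the uniform bound for steps ≥ 1
  have hi : ∀ i : ℕ, i < n →
      Real.log (((1 : Matrix (Fin d) (Fin d) ℝ) + c⁻¹ • lasecD d b c x (i+1)).det)
        ≤ d * (K / c) := by
    intro i hin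
    have hMi : ((1 : Matrix (Fin d) (Fin d) ℝ) + c⁻¹ • lasecD d b c x (i+1)).PosDef :=
      pd_one_add_smul hc (hPD (i+1))
    have hpsd : ((1 + K/c) • (1 : Matrix (Fin d) (Fin d) ℝ)
        - ((1 : Matrix (Fin d) (Fin d) ℝ) + c⁻¹ • lasecD d b c x (i+1))).PosSemidef := by
      have e : (1 + K/c) • (1 : Matrix (Fin d) (Fin d) ℝ)
          - ((1 : Matrix (Fin d) (Fin d) ℝ) + c⁻¹ • lasecD d b c x (i+1))
          = c⁻¹ • (K • (1 : Matrix (Fin d) (Fin d) ℝ) - lasecD d b c x (i+1)) := by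
        rw [smul_sub, smul_smul, add_smul, one_smul, ← div_eq_inv_mul]
        abel
      rw [e]
      exact psd_smul (inv_nonneg.mpr hc.le)
        (hEig (i+1) (Nat.succ_le_succ (Nat.zero_le i)) (by omega))
    have ht1 : (0:ℝ) < 1 + K/c := by positivity
    have hld := log_det_le_card_mul_log hMi hpsd
    have hlog : Real.log (1 + K/c) ≤ K/c := by
      have := Real.log_le_sub_one_of_pos ht1
      linarith
    calc Real.log (((1 : Matrix (Fin d) (Fin d) ℝ) + c⁻¹ • lasecD d b c x (i+1)).det)
        ≤ d * Real.log (1 + K/c) := hld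
      _ ≤ d * (K / c) := mul_le_mul_of_nonneg_left hlog (Nat.cast_nonneg d)
  -- assemble the sums
  rw [sum_Icc_one (n+1) (fun k => x k ⬝ᵥ ((lasecD d b c x k)⁻¹ *ᵥ x k))]
  have hsum1 : ∑ i ∈ range (n+1), x (i+1) ⬝ᵥ ((lasecD d b c x (i+1))⁻¹ *ᵥ x (i+1))
      ≤ ∑ i ∈ range (n+1),
          ((Real.log (lasecD d b c x (i+1)).det - Real.log (lasecD d b c x i).det)
            + Real.log (((1 : Matrix (Fin d) (Fin d) ℝ) + c⁻¹ • lasecD d b c x i).det)) :=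
    Finset.sum_le_sum fun i _ => hterm i
  have hsplit : ∑ i ∈ range (n+1),
        ((Real.log (lasecD d b c x (i+1)).det - Real.log (lasecD d b c x i).det)
          + Real.log (((1 : Matrix (Fin d) (Fin d) ℝ) + c⁻¹ • lasecD d b c x i).det))
      = (Real.log (lasecD d b c x (n+1)).det - Real.log (lasecD d b c x 0).det)
        + ∑ i ∈ range (n+1),
            Real.log (((1 : Matrix (Fin d) (Fin d) ℝ) + c⁻¹ • lasecD d b c x i).det) := by
    rw [Finset.sum_add_distrib,
      Finset.sum_range_sub (fun k => Real.log (lasecD d b c x k).det)]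
  have hsum2 : ∑ i ∈ range (n+1),
        Real.log (((1 : Matrix (Fin d) (Fin d) ℝ) + c⁻¹ • lasecD d b c x i).det)
      ≤ c⁻¹ * (lasecD d b c x 0).trace + n * (d * (K / c)) := by
    rw [Finset.sum_range_succ']
    have hb1 : ∑ i ∈ range n,
        Real.log (((1 : Matrix (Fin d) (Fin d) ℝ) + c⁻¹ • lasecD d b c x (i+1)).det)
        ≤ ∑ _i ∈ range n, d * (K / c) :=
      Finset.sum_le_sum fun i hi' => hi i (Finset.mem_range.mp hi')
    rw [Finset.sum_const, Finset.card_range, nsmul_eq_mul] at hb1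
    linarith
  -- determinant comparison
  have hgm : Real.log (lasecD d b c x (n+1)).det - Real.log (lasecD d b c x 0).det
      ≤ Real.log ((b⁻¹ • lasecD d b c x (n+1)).det) := by
    have hdet0 : (lasecD d b c x 0).det = (b * c / (c - b)) ^ d := by
      show ((b * c / (c - b)) • (1 : Matrix (Fin d) (Fin d) ℝ)).det = _
      rw [Matrix.det_smul, Matrix.det_one, mul_one, Fintype.card_fin]
    have hdetm : (b⁻¹ • lasecD d b c x (n+1)).det
        = (b⁻¹) ^ d * (lasecD d b c x (n+1)).det := by
      rw [Matrix.det_smul, Fintype.card_fin]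
    have hpos0 : 0 < b * c / (c - b) := div_pos (mul_pos hb hc) (by linarith)
    rw [hdet0, hdetm, Real.log_mul (pow_ne_zero d (inv_ne_zero hb.ne'))
      (hPD (n+1)).det_pos.ne', Real.log_pow, Real.log_pow, Real.log_inv]
    have hlb : Real.log b ≤ Real.log (b * c / (c - b)) := by
      apply Real.log_le_log hb
      rw [le_div_iff₀ (by linarith : (0:ℝ) < c - b)]
      nlinarith
    have : (d:ℝ) * Real.log b ≤ d * Real.log (b * c / (c - b)) :=
      mul_le_mul_of_nonneg_left hlb (Nat.cast_nonneg d)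
    linarith
  -- final arithmetic
  have harith : (n:ℝ) * (d * (K / c)) ≤ ((n+1 : ℕ):ℝ) / c * d * K := by
    push_cast
    have h1 : (n:ℝ) * (d * (K / c)) = (n:ℝ) / c * d * K := by ring
    have h2 : ((n:ℝ)) / c * d * K ≤ ((n:ℝ) + 1) / c * d * K := by
      gcongr
      linarith
    linarith
  calc ∑ i ∈ range (n+1), x (i+1) ⬝ᵥ ((lasecD d b c x (i+1))⁻¹ *ᵥ x (i+1))
      ≤ (Real.log (lasecD d b c x (n+1)).det - Real.log (lasecD d b c x 0).det)
        + ∑ i ∈ range (n+1),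
            Real.log (((1 : Matrix (Fin d) (Fin d) ℝ) + c⁻¹ • lasecD d b c x i).det) := by
        rw [← hsplit]; exact hsum1
    _ ≤ Real.log ((b⁻¹ • lasecD d b c x (n+1)).det)
        + (c⁻¹ * (lasecD d b c x 0).trace + n * (d * (K / c))) := by
        have := hsum2
        linarith
    _ ≤ Real.log ((b⁻¹ • lasecD d b c x (n+1)).det)
        + c⁻¹ * (lasecD d b c x 0).trace
        + ((n+1 : ℕ):ℝ) / c * (d:ℝ) * K := by
        have := harith
        linarith

end
end
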